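/- Let p_1, ..., p_m be independent random variables, let N ⊆ {1,...,m} with |N| = m_0 be such that p_j is super-uniform (P(p_j ≤ t) ≤ t for all t ∈ [0,1]) for every j ∈ N. Fix α ∈ (0,1) and run the Benjamini–Hochberg step-up procedure at level α: l̂ = max{l : p_(l) ≤ lα/m}, rejecting R = {j : p_j ≤ p_(l̂)} (R = ∅ if l̂ does not exist). Then the false discovery rate satisfies E[ #(R ∩ N)/max(1, |R|) ] ≤ α·m_0/m. -/

import Mathlib

open MeasureTheory ProbabilityTheory

open Finset

/-- The set of indices `l` (0-based, representing order statistic `l+1`) at which the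
weighted step-up boundary is met: `p_(l+1) ≤ (l+1)·α/(θ·m)`. -/
noncomputable def stepUpIdx {m : ℕ} (p : Fin m → ℝ) (α θ : ℝ) : Finset (Fin m) :=
  Finset.univ.filter fun l => p (Tuple.sort p l) ≤ ((l : ℕ) + 1) * α / (θ * m)

/-- The rejection set of the weighted Benjamini–Hochberg step-up procedure:
all `j` with `p j ≤ p_(l̂)`, where `l̂` is the largest index meeting the boundary;
empty if no index meets the boundary. -/
noncomputable def stepUpReject {m : ℕ} (p : Fin m → ℝ) (α θ : ℝ) : Finset (Fin m) :=
  if h : (stepUpIdx p α θ).Nonempty then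
    Finset.univ.filter fun j => p j ≤ p (Tuple.sort p ((stepUpIdx p α θ).max' h))
  else ∅

/-- The data-driven threshold `T = p_(l̂)` of the weighted step-up procedure (0 if no
index meets the boundary). -/
noncomputable def stepUpThreshold {m : ℕ} (p : Fin m → ℝ) (α θ : ℝ) : ℝ :=
  if h : (stepUpIdx p α θ).Nonempty then p (Tuple.sort p ((stepUpIdx p α θ).max' h)) else 0

namespace BHaux

variable {m : ℕ}

/-- number of p-values ≤ c -/
noncomputable def Gcnt (p : Fin m → ℝ) (c : ℝ) : ℕ := (univ.filter fun j => p j ≤ c).card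

lemma Gcnt_le (p : Fin m → ℝ) (c : ℝ) : Gcnt p c ≤ m :=
  le_trans (card_filter_le univ _) (by simp)

lemma Gcnt_mono (p : Fin m → ℝ) {c c' : ℝ} (h : c ≤ c') : Gcnt p c ≤ Gcnt p c' := by
  apply card_le_card
  intro j hj
  simp only [mem_filter, mem_univ, true_and] at *
  exact hj.trans h

lemma bridge (p : Fin m → ℝ) (c : ℝ) (l : Fin m) :
    p (Tuple.sort p l) ≤ c ↔ (l : ℕ) < Gcnt p c := by
  have h := Tuple.lt_card_le_iff_apply_le_of_monotone (f := p ∘ Tuple.sort p) (a := c)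
    (j := l) (Tuple.monotone_sort p)
  have hcard : (univ.filter fun i => (p ∘ Tuple.sort p) i ≤ c).card = Gcnt p c := by
    exact Finset.card_equiv (Tuple.sort p) (fun i => by simp)
  rw [hcard] at h
  exact ⟨fun hp => h.2 hp, fun hl => h.1 hl⟩

/-- candidate rejection counts -/
noncomputable def Fset (p : Fin m → ℝ) (α : ℝ) : Finset ℕ :=
  (Finset.range (m + 1)).filter fun k => k ≤ Gcnt p ((k : ℝ) * α / m)

lemma zero_mem_Fset (p : Fin m → ℝ) (α : ℝ) : 0 ∈ Fset p α := by simp [Fset]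

/-- the BH rejection count -/
noncomputable def khat (p : Fin m → ℝ) (α : ℝ) : ℕ :=
  (Fset p α).max' ⟨0, zero_mem_Fset p α⟩

lemma khat_mem (p : Fin m → ℝ) (α : ℝ) : khat p α ∈ Fset p α := Finset.max'_mem _ _

lemma le_khat {p : Fin m → ℝ} {α : ℝ} {k : ℕ} (hk : k ∈ Fset p α) : k ≤ khat p α :=
  Finset.le_max' _ _ hk

lemma khat_le (p : Fin m → ℝ) (α : ℝ) : khat p α ≤ m := by
  have := khat_mem p α
  simp only [Fset, mem_filter, mem_range] at this
  omega

lemma khat_le_Gcnt (p : Fin m → ℝ) (α : ℝ) :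
    khat p α ≤ Gcnt p ((khat p α : ℝ) * α / m) := by
  have := khat_mem p α
  simp only [Fset, mem_filter, mem_range] at this
  exact this.2

lemma khat_eq_iff {p : Fin m → ℝ} {α : ℝ} {k : ℕ} :
    khat p α = k ↔ k ∈ Fset p α ∧ ∀ k' ∈ Fset p α, k' ≤ k := by
  constructor
  · rintro rfl
    exact ⟨khat_mem p α, fun k' hk' => le_khat hk'⟩
  · rintro ⟨h1, h2⟩
    exact le_antisymm (h2 _ (khat_mem p α)) (le_khat h1)

lemma scale_mono {α : ℝ} (hα : 0 ≤ α) {a b : ℝ} (h : a ≤ b) :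
    a * α / (m : ℝ) ≤ b * α / (m : ℝ) := by gcongr

lemma mem_stepUpIdx_iff {α : ℝ} (p : Fin m → ℝ) (l : Fin m) :
    l ∈ stepUpIdx p α 1 ↔ (l : ℕ) + 1 ≤ Gcnt p (((l : ℕ) + 1 : ℕ) * α / m) := by
  simp only [stepUpIdx, mem_filter, mem_univ, true_and, one_mul]
  rw [bridge]
  push_cast
  omega

lemma khat_pos_of_nonempty {α : ℝ} (hm : 0 < m) (hα : 0 < α) (p : Fin m → ℝ) (h : (stepUpIdx p α 1).Nonempty) :
    khat p α = ((stepUpIdx p α 1).max' h : ℕ) + 1 := by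
  set l := (stepUpIdx p α 1).max' h with hl
  have hlmem : l ∈ stepUpIdx p α 1 := Finset.max'_mem _ _
  rw [khat_eq_iff]
  constructor
  · rw [mem_stepUpIdx_iff] at hlmem
    simp only [Fset, mem_filter, mem_range]
    exact ⟨by omega, by exact_mod_cast hlmem⟩
  · intro k hk
    simp only [Fset, mem_filter, mem_range] at hk
    rcases Nat.eq_zero_or_pos k with rfl | hkpos
    · omega
    · -- k ≥ 1 : index k-1 is in stepUpIdx
      have hkm : k - 1 < m := by omega
      have : (⟨k - 1, hkm⟩ : Fin m) ∈ stepUpIdx p α 1 := by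
        rw [mem_stepUpIdx_iff]
        simp only
        have : k - 1 + 1 = k := by omega
        rw [this]
        exact hk.2
      have := Finset.le_max' _ _ this
      rw [← hl] at this
      have : (k - 1 : ℕ) ≤ (l : ℕ) := this
      omega

lemma khat_zero_of_empty {α : ℝ} (hm : 0 < m) (hα : 0 < α) (p : Fin m → ℝ) (h : ¬ (stepUpIdx p α 1).Nonempty) :
    khat p α = 0 := by
  rw [khat_eq_iff]
  refine ⟨zero_mem_Fset p α, fun k hk => ?_⟩
  by_contra hk0
  simp only [Fset, mem_filter, mem_range] at hk
  have hkpos : 0 < k := by omega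
  have hkm : k - 1 < m := by
    have := hk.2.trans (Gcnt_le p _)
    omega
  apply h
  refine ⟨⟨k - 1, hkm⟩, ?_⟩
  rw [mem_stepUpIdx_iff]
  simp only
  have hk1 : k - 1 + 1 = k := by omega
  rw [hk1]
  exact hk.2

lemma Gcnt_khat_eq {α : ℝ} (hα : 0 ≤ α) (p : Fin m → ℝ) :
    Gcnt p ((khat p α : ℝ) * α / m) = khat p α := by
  refine le_antisymm ?_ (khat_le_Gcnt p α)
  by_contra hcon
  push_neg at hcon
  set K := khat p α with hK
  have h1 : K + 1 ≤ Gcnt p ((K : ℝ) * α / m) := hcon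
  have hmem : K + 1 ∈ Fset p α := by
    simp only [Fset, mem_filter, mem_range]
    have h2 : Gcnt p ((K : ℝ) * α / m) ≤ m := Gcnt_le p _
    refine ⟨by omega, ?_⟩
    refine h1.trans (Gcnt_mono p ?_)
    have hcast : ((K + 1 : ℕ) : ℝ) = (K : ℝ) + 1 := by push_cast; ring
    rw [hcast]
    exact scale_mono hα (by linarith)
  have := le_khat hmem
  omega

lemma stepUpReject_eq {α : ℝ} (hm : 0 < m) (hα : 0 < α) (p : Fin m → ℝ) :
    stepUpReject p α 1 = univ.filter fun j => p j ≤ (khat p α : ℝ) * α / m := by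
  unfold stepUpReject
  split_ifs with h
  · set l := (stepUpIdx p α 1).max' h with hl
    have hK : khat p α = (l : ℕ) + 1 := khat_pos_of_nonempty hm hα p h
    have hlmem : l ∈ stepUpIdx p α 1 := Finset.max'_mem _ _
    have hthr : p (Tuple.sort p l) ≤ ((l : ℕ) + 1 : ℝ) * α / m := by
      simp only [stepUpIdx, mem_filter, mem_univ, true_and, one_mul] at hlmem
      exact hlmem
    have hcast : ((khat p α : ℕ) : ℝ) * α / m = ((l : ℕ) + 1 : ℝ) * α / m := by
      rw [hK]; push_cast; ring
    have hsub : (univ.filter fun j => p j ≤ p (Tuple.sort p l))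
        ⊆ univ.filter fun j => p j ≤ (khat p α : ℝ) * α / m := by
      intro j hj
      simp only [mem_filter, mem_univ, true_and] at *
      rw [hcast]
      exact hj.trans hthr
    refine Finset.eq_of_subset_of_card_le hsub ?_
    -- card of RHS filter = Gcnt (Kα/m) = K = l+1 ≤ Gcnt (thr) = card LHS filter
    have hrhs : (univ.filter fun j => p j ≤ (khat p α : ℝ) * α / m).card = khat p α :=
      Gcnt_khat_eq hα.le p
    have hlhs : khat p α ≤ (univ.filter fun j => p j ≤ p (Tuple.sort p l)).card := by
      have hb : (l : ℕ) < Gcnt p (p (Tuple.sort p l)) := (bridge p _ l).1 le_rfl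
      have : khat p α ≤ Gcnt p (p (Tuple.sort p l)) := by rw [hK]; omega
      exact this
    rw [hrhs]
    exact hlhs
  · -- empty case
    have hK : khat p α = 0 := khat_zero_of_empty hm hα p h
    rw [hK]
    symm
    rw [Finset.filter_eq_empty_iff]
    intro j _
    push_cast
    rw [zero_mul, zero_div]
    intro hj0
    apply h
    refine ⟨⟨0, hm⟩, ?_⟩
    rw [mem_stepUpIdx_iff]
    simp only [Fin.val_mk]
    have : 0 < Gcnt p (((0 : ℕ) + 1 : ℕ) * α / m) := by
      refine Finset.card_pos.2 ⟨j, ?_⟩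
      simp only [mem_filter, mem_univ, true_and]
      push_cast
      have : (0:ℝ) ≤ 1 * α / m := by positivity
      linarith
    omega

lemma stepUpReject_card {α : ℝ} (hm : 0 < m) (hα : 0 < α) (p : Fin m → ℝ) :
    (stepUpReject p α 1).card = khat p α := by
  rw [stepUpReject_eq hm hα p]
  exact Gcnt_khat_eq hα.le p

lemma Gcnt_update {p : Fin m → ℝ} {j : Fin m} {c : ℝ} (h0 : 0 ≤ c) (hj : p j ≤ c) :
    Gcnt (Function.update p j 0) c = Gcnt p c := by
  unfold Gcnt
  congr 1
  ext i
  simp only [mem_filter, mem_univ, true_and, Function.update_apply]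
  by_cases hij : i = j
  · subst hij; simp [h0, hj]
  · simp [hij]

lemma khat_update_iff {α : ℝ} (hα : 0 ≤ α) (p : Fin m → ℝ) (j : Fin m) (k : ℕ)
    (hjk : p j ≤ (k : ℝ) * α / m) :
    khat p α = k ↔ khat (Function.update p j 0) α = k := by
  have hiff : ∀ k', k ≤ k' → (k' ∈ Fset (Function.update p j 0) α ↔ k' ∈ Fset p α) := by
    intro k' hk'
    have hc : (k : ℝ) * α / m ≤ (k' : ℝ) * α / m :=
      scale_mono hα (by exact_mod_cast hk')
    have h0 : 0 ≤ (k' : ℝ) * α / m := by positivity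
    simp only [Fset, mem_filter, mem_range]
    rw [Gcnt_update h0 (hjk.trans hc)]
  have aux : ∀ (q r : Fin m → ℝ),
      (∀ k', k ≤ k' → (k' ∈ Fset q α ↔ k' ∈ Fset r α)) → khat q α = k → khat r α = k := by
    intro q r hqr hq
    rw [khat_eq_iff] at hq ⊢
    refine ⟨(hqr k le_rfl).1 hq.1, fun k' hk' => ?_⟩
    by_contra hgt
    push_neg at hgt
    have : k' ∈ Fset q α := (hqr k' hgt.le).2 hk'
    have := hq.2 k' this
    omega
  exact ⟨aux p _ (fun k' h => (hiff k' h).symm), aux _ p hiff⟩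

lemma measurable_Gcnt (c : ℝ) : Measurable fun q : Fin m → ℝ => Gcnt q c := by
  have h : (fun q : Fin m → ℝ => Gcnt q c) = fun q => ∑ j : Fin m, if q j ≤ c then 1 else 0 := by
    funext q; rw [Gcnt, Finset.card_filter]
  rw [h]
  exact Finset.measurable_sum _ fun j _ =>
    Measurable.ite (measurableSet_le (measurable_pi_apply j) measurable_const)
      measurable_const measurable_const

lemma measurableSet_Gcnt_ge (c : ℝ) (k : ℕ) :
    MeasurableSet {q : Fin m → ℝ | k ≤ Gcnt q c} := by
  exact measurable_Gcnt c measurableSet_Ici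

lemma measurable_khat (α : ℝ) : Measurable fun q : Fin m → ℝ => khat q α := by
  apply measurable_to_countable'
  intro k
  have hset : (fun q : Fin m → ℝ => khat q α) ⁻¹' {k} =
      ({q : Fin m → ℝ | k ∈ Fset q α} ∩
        ⋂ k' ∈ Finset.range (m + 1), {q : Fin m → ℝ | k' ≤ Gcnt q ((k' : ℝ) * α / m) → k' ≤ k}) := by
    ext q
    simp only [Set.mem_preimage, Set.mem_singleton_iff, Set.mem_inter_iff, Set.mem_iInter,
      Set.mem_setOf_eq, khat_eq_iff, Fset, mem_filter, mem_range]
    constructor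
    · rintro ⟨h1, h2⟩; exact ⟨h1, fun k' hk' hg => h2 k' ⟨hk', hg⟩⟩
    · rintro ⟨h1, h2⟩; exact ⟨h1, fun k' hk' => h2 k' hk'.1 hk'.2⟩
  rw [hset]
  apply MeasurableSet.inter
  · by_cases hk : k < m + 1
    · have he : {q : Fin m → ℝ | k ∈ Fset q α} = {q | k ≤ Gcnt q ((k : ℝ) * α / m)} := by
        ext q; simp [Fset, hk]
      rw [he]
      exact measurableSet_Gcnt_ge _ _
    · have he : {q : Fin m → ℝ | k ∈ Fset q α} = ∅ := by
        ext q; simp [Fset, hk]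
      rw [he]; exact MeasurableSet.empty
  · refine MeasurableSet.biInter (Finset.range (m + 1) : Finset ℕ).countable_toSet
      fun k' _ => ?_
    by_cases hk' : k' ≤ k
    · have he : {q : Fin m → ℝ | k' ≤ Gcnt q ((k' : ℝ) * α / m) → k' ≤ k} = Set.univ := by
        ext q; simp [hk']
      rw [he]; exact MeasurableSet.univ
    · have he : {q : Fin m → ℝ | k' ≤ Gcnt q ((k' : ℝ) * α / m) → k' ≤ k}
          = {q | k' ≤ Gcnt q ((k' : ℝ) * α / m)}ᶜ := by
        ext q; simp [hk']
      rw [he]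
      exact (measurableSet_Gcnt_ge _ _).compl

lemma pointwise_decomp (hm : 0 < m) {α : ℝ} (hα : 0 < α) (N : Finset (Fin m)) (q : Fin m → ℝ) :
    ((stepUpReject q α 1 ∩ N).card : ℝ) / max 1 ((stepUpReject q α 1).card : ℝ)
      = ∑ j ∈ N, ∑ k ∈ Finset.range (m + 1),
          (if (q j ≤ (k : ℝ) * α / m ∧ khat q α = k) then 1 / (k : ℝ) else 0) := by
  have hR := stepUpReject_eq hm hα q
  have hRcard := stepUpReject_card hm hα q
  set K := khat q α with hK
  have hKm : K ∈ Finset.range (m + 1) := by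
    rw [Finset.mem_range]
    exact Nat.lt_succ_of_le (khat_le q α)
  have hinner : ∀ j, (∑ k ∈ Finset.range (m + 1),
      (if (q j ≤ (k : ℝ) * α / m ∧ khat q α = k) then 1 / (k : ℝ) else 0))
      = if q j ≤ (K : ℝ) * α / m then 1 / (K : ℝ) else 0 := by
    intro j
    rw [Finset.sum_eq_single_of_mem K hKm]
    · simp [← hK]
    · intro k _ hne
      have : ¬(q j ≤ (k : ℝ) * α / m ∧ khat q α = k) := by
        rintro ⟨-, h2⟩
        rw [← hK] at h2
        exact hne h2.symm
      rw [if_neg this]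
  rw [Finset.sum_congr rfl (fun j _ => hinner j), ← Finset.sum_filter,
    Finset.sum_const, nsmul_eq_mul]
  have hRN : stepUpReject q α 1 ∩ N = N.filter (fun j => q j ≤ (K : ℝ) * α / m) := by
    rw [hR]
    ext i
    simp only [Finset.mem_inter, Finset.mem_filter, Finset.mem_univ, true_and]
    tauto
  rw [hRN, hRcard]
  rcases Nat.eq_zero_or_pos K with hK0 | hKpos
  · have hsub : N.filter (fun j => q j ≤ (K : ℝ) * α / m) ⊆ stepUpReject q α 1 := by
      rw [← hRN]; exact Finset.inter_subset_left
    have hcard0 : (N.filter (fun j => q j ≤ (K : ℝ) * α / m)).card = 0 := by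
      have h1 : (N.filter (fun j => q j ≤ (K : ℝ) * α / m)).card ≤ K :=
        (Finset.card_le_card hsub).trans (le_of_eq hRcard)
      omega
    rw [hcard0, hK0]
    simp
  · have h1K : (1 : ℝ) ≤ (K : ℝ) := by exact_mod_cast hKpos
    rw [max_eq_right h1K, mul_one_div]

end BHaux

/-- FDR control of the Benjamini–Hochberg procedure under independence: with m₀
independent super-uniform null p-values among m independent p-values, the FDR of the
BH step-up procedure at level α is at most α·m₀/m. -/
theorem BH_FDR_control
    {Ω : Type*} [MeasurableSpace Ω] (μ : Measure Ω) [IsProbabilityMeasure μ]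
    {m : ℕ} (p : Fin m → Ω → ℝ) (hmeas : ∀ j, Measurable (p j))
    (hindep : iIndepFun p μ)
    (N : Finset (Fin m)) (m₀ : ℕ) (hm₀ : N.card = m₀)
    (hnull : ∀ j ∈ N, ∀ t ∈ Set.Icc (0 : ℝ) 1, μ {ω | p j ω ≤ t} ≤ ENNReal.ofReal t)
    (α : ℝ) (hα : α ∈ Set.Ioo (0 : ℝ) 1) :
    (∫ ω, (((stepUpReject (fun j => p j ω) α 1) ∩ N).card : ℝ) /
        max 1 (((stepUpReject (fun j => p j ω) α 1).card : ℝ)) ∂μ)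
      ≤ α * m₀ / m := by
  obtain ⟨hα0, hα1⟩ := hα
  rcases Nat.eq_zero_or_pos m with hm | hm
  · subst hm
    have hN : N = ∅ := Finset.eq_empty_of_isEmpty N
    have hm0 : m₀ = 0 := by rw [← hm₀, hN]; simp
    subst hm0
    simp [hN]
  · have hmeasP : Measurable (fun ω => (fun i => p i ω)) := measurable_pi_lambda _ hmeas
    set D : Fin m → ℕ → Set Ω :=
      fun j k => {ω | p j ω ≤ (k : ℝ) * α / m ∧ BHaux.khat (fun i => p i ω) α = k} with hD
    set B : Fin m → ℕ → Set Ω := fun j k => {ω | p j ω ≤ (k : ℝ) * α / m} with hB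
    set C : Fin m → ℕ → Set Ω :=
      fun j k => {ω | BHaux.khat (Function.update (fun i => p i ω) j 0) α = k} with hC
    have hBmeas : ∀ j k, MeasurableSet (B j k) := fun j k =>
      measurableSet_le (hmeas j) measurable_const
    have hCmeas : ∀ j k, MeasurableSet (C j k) := by
      intro j k
      have hupd : Measurable fun ω => Function.update (fun i => p i ω) j (0 : ℝ) := by
        apply measurable_pi_lambda
        intro i
        have he : (fun ω => Function.update (fun i' => p i' ω) j (0 : ℝ) i)
            = fun ω => if i = j then (0 : ℝ) else p i ω := by
          funext ω; rw [Function.update_apply]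
        rw [he]
        by_cases hij : i = j
        · simp only [if_pos hij]; exact measurable_const
        · simp only [if_neg hij]; exact hmeas i
      exact ((BHaux.measurable_khat α).comp hupd) (measurableSet_singleton k)
    have hDmeas : ∀ j k, MeasurableSet (D j k) := fun j k =>
      (hBmeas j k).inter (((BHaux.measurable_khat α).comp hmeasP) (measurableSet_singleton k))
    have hDBC : ∀ j k, D j k = B j k ∩ C j k := by
      intro j k
      ext ω
      simp only [hD, hB, hC, Set.mem_inter_iff, Set.mem_setOf_eq]
      constructor
      · rintro ⟨h1, h2⟩
        exact ⟨h1, (BHaux.khat_update_iff hα0.le (fun i => p i ω) j k h1).1 h2⟩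
      · rintro ⟨h1, h2⟩
        exact ⟨h1, (BHaux.khat_update_iff hα0.le (fun i => p i ω) j k h1).2 h2⟩
    have hind : ∀ j k, μ (B j k ∩ C j k) = μ (B j k) * μ (C j k) := by
      intro j k
      have hIF := hindep.indepFun_finset {j} {j}ᶜ disjoint_compl_right hmeas
      have hBX : B j k = (fun a (i : ({j} : Finset (Fin m))) => p i a) ⁻¹'
          {v | v ⟨j, Finset.mem_singleton_self j⟩ ≤ (k : ℝ) * α / m} := rfl
      have hCY : C j k = (fun a (i : ({j}ᶜ : Finset (Fin m))) => p i a) ⁻¹'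
          {v | BHaux.khat
            (fun i => if h : i ∈ ({j}ᶜ : Finset (Fin m)) then v ⟨i, h⟩ else 0) α = k} := by
        ext ω
        simp only [hC, Set.mem_preimage, Set.mem_setOf_eq]
        have hfun : (fun i => if h : i ∈ ({j}ᶜ : Finset (Fin m)) then p i ω else (0 : ℝ))
            = Function.update (fun i => p i ω) j 0 := by
          funext i
          by_cases hij : i = j
          · subst hij
            rw [dif_neg (by simp), Function.update_self]
          · rw [dif_pos (by simp [hij]), Function.update_of_ne hij]
        rw [hfun]
      rw [hBX, hCY]
      refine hIF.measure_inter_preimage_eq_mul _ _ ?_ ?_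
      · exact measurableSet_le (measurable_pi_apply _) measurable_const
      · refine ((BHaux.measurable_khat α).comp (measurable_pi_lambda _ (fun i => ?_)))
          (measurableSet_singleton k)
        by_cases hi : i ∈ ({j}ᶜ : Finset (Fin m))
        · simp only [dif_pos hi]; exact measurable_pi_apply _
        · simp only [dif_neg hi]; exact measurable_const
    have hBbound : ∀ j ∈ N, ∀ k, k ∈ Finset.range (m + 1) → 1 ≤ k →
        μ (B j k) ≤ ENNReal.ofReal ((k : ℝ) * α / m) := by
      intro j hj k hk hk1
      rw [Finset.mem_range] at hk
      refine hnull j hj _ (Set.mem_Icc.mpr ⟨by positivity, ?_⟩)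
      have hkm : (k : ℝ) ≤ m := by exact_mod_cast Nat.lt_succ_iff.mp hk
      have hmpos : (0 : ℝ) < m := by exact_mod_cast hm
      have h1 : (k : ℝ) * α / m ≤ (m : ℝ) * α / m := BHaux.scale_mono hα0.le hkm
      have h2 : (m : ℝ) * α / m = α := by field_simp
      linarith
    have hsumC : ∀ j, ∑ k ∈ Finset.range (m + 1), μ (C j k) ≤ 1 := by
      intro j
      have hd : Set.PairwiseDisjoint (↑(Finset.range (m + 1))) (C j) := by
        intro a _ b _ hab
        apply Set.disjoint_left.mpr
        intro ω ha hb
        apply hab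
        simp only [hC, Set.mem_setOf_eq] at ha hb
        rw [← ha, ← hb]
      rw [← measure_biUnion_finset hd (fun k _ => hCmeas j k)]
      exact prob_le_one
    have hint : ∀ j k, Integrable (fun ω => Set.indicator (D j k) (fun _ => 1 / (k : ℝ)) ω) μ :=
      fun j k => (integrable_const _).indicator (hDmeas j k)
    have hptw : (fun ω => (((stepUpReject (fun j => p j ω) α 1) ∩ N).card : ℝ) /
        max 1 (((stepUpReject (fun j => p j ω) α 1).card : ℝ)))
        = fun ω => ∑ j ∈ N, ∑ k ∈ Finset.range (m + 1),
            Set.indicator (D j k) (fun _ => 1 / (k : ℝ)) ω := by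
      funext ω
      rw [BHaux.pointwise_decomp hm hα0 N (fun i => p i ω)]
      refine Finset.sum_congr rfl fun j _ => Finset.sum_congr rfl fun k _ => ?_
      rw [Set.indicator_apply]
      simp only [hD, Set.mem_setOf_eq]
    rw [hptw, integral_finset_sum _ (fun j _ =>
      integrable_finset_sum _ (fun k _ => hint j k))]
    have hjk : ∀ j, ∫ ω, ∑ k ∈ Finset.range (m + 1),
        Set.indicator (D j k) (fun _ => 1 / (k : ℝ)) ω ∂μ
        = ∑ k ∈ Finset.range (m + 1), (μ (D j k)).toReal * (1 / (k : ℝ)) := by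
      intro j
      rw [integral_finset_sum _ (fun k _ => hint j k)]
      refine Finset.sum_congr rfl fun k _ => ?_
      rw [integral_indicator (hDmeas j k), setIntegral_const, smul_eq_mul, measureReal_def]
    rw [Finset.sum_congr rfl (fun j _ => hjk j)]
    have hmain : ∀ j ∈ N, ∑ k ∈ Finset.range (m + 1), (μ (D j k)).toReal * (1 / (k : ℝ))
        ≤ α / m := by
      intro j hj
      calc ∑ k ∈ Finset.range (m + 1), (μ (D j k)).toReal * (1 / (k : ℝ))
          ≤ ∑ k ∈ Finset.range (m + 1), (α / m) * (μ (C j k)).toReal := by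
            refine Finset.sum_le_sum fun k hk => ?_
            rcases Nat.eq_zero_or_pos k with rfl | hk1
            · simp only [Nat.cast_zero, div_zero, mul_zero]
              positivity
            · have hkR : (0 : ℝ) < k := by exact_mod_cast hk1
              rw [hDBC j k, hind j k, ENNReal.toReal_mul]
              have h1 : (μ (B j k)).toReal ≤ (k : ℝ) * α / m :=
                ENNReal.toReal_le_of_le_ofReal (by positivity) (hBbound j hj k hk hk1)
              calc (μ (B j k)).toReal * (μ (C j k)).toReal * (1 / (k : ℝ))
                  ≤ ((k : ℝ) * α / m) * (μ (C j k)).toReal * (1 / (k : ℝ)) := by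
                    gcongr
                _ = (α / m) * (μ (C j k)).toReal := by
                    field_simp
        _ = (α / m) * ∑ k ∈ Finset.range (m + 1), (μ (C j k)).toReal := by
            rw [Finset.mul_sum]
        _ ≤ (α / m) * 1 := by
            have hC1 : ∑ k ∈ Finset.range (m + 1), (μ (C j k)).toReal ≤ 1 := by
              rw [← ENNReal.toReal_sum (fun k _ => measure_ne_top μ _)]
              simpa using ENNReal.toReal_mono ENNReal.one_ne_top (hsumC j)
            have h0 : (0 : ℝ) ≤ α / m := by positivity
            exact mul_le_mul_of_nonneg_left hC1 h0
        _ = α / m := mul_one _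
    calc ∑ j ∈ N, ∑ k ∈ Finset.range (m + 1), (μ (D j k)).toReal * (1 / (k : ℝ))
        ≤ ∑ j ∈ N, (α / m) := Finset.sum_le_sum hmain
      _ = α * m₀ / m := by
          rw [Finset.sum_const, nsmul_eq_mul, hm₀]
          ring
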